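/- A finite graph is obligatory if and only if it is bipartite; that is, every graph of chromatic number at least ℵ₁ contains a copy of a given finite graph F (for every such graph) exactly when F is bipartite. -/

import Mathlib

open Cardinal

universe u

/-- A colouring `f` of the vertices is proper for the edge set `E` if no edge
is monochromatic. -/
def IsProperColoring {V : Type*} {α : Type*} (E : Set (Set V)) (f : V → α) : Prop :=
  ∀ e ∈ E, ∃ x ∈ e, ∃ y ∈ e, f x ≠ f y

/-- The chromatic number of the hypergraph `(V, E)`. -/
noncomputable def chromaticNumber (V : Type u) (E : Set (Set V)) : Cardinal.{u} :=
  sInf { κ : Cardinal.{u} | ∃ (α : Type u) (f : V → α), #α = κ ∧ IsProperColoring E f }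


def ShiftRel {O : Type*} {r : ℕ} (A B : Fin r → O) : Prop :=
  ∀ (i : ℕ) (h : i + 1 < r), B ⟨i, Nat.lt_of_succ_lt h⟩ = A ⟨i + 1, h⟩

noncomputable def tower (r : ℕ) (μ : Cardinal.{u}) : Cardinal.{u} :=
  (fun c => (2 : Cardinal.{u}) ^ c)^[r] (max μ ℵ₀)

def graphOf {X : Type*} (E : Set (Set X)) : SimpleGraph X where
  Adj u v := u ≠ v ∧ {u, v} ∈ E
  symm := by
    refine ⟨fun u v h => ?_⟩
    exact ⟨h.1.symm, Set.pair_comm u v ▸ h.2⟩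
  loopless := by refine ⟨fun u h => ?_⟩; exact h.1 rfl


lemma graph_proper {X α : Type*} {E : Set (Set X)} (h2 : ∀ e ∈ E, e.ncard = 2)
    {f : X → α} (hf : IsProperColoring E f) {u v : X} (huv : (graphOf E).Adj u v) :
    f u ≠ f v := by
  obtain ⟨x, hx, y, hy, hxy⟩ := hf _ huv.2
  rcases hx with rfl | rfl <;> rcases hy with rfl | rfl <;> first
    | exact absurd rfl hxy
    | exact hxy
    | exact fun h => hxy (h.symm)

lemma proper_of_graph_proper {X α : Type*} {E : Set (Set X)} (h2 : ∀ e ∈ E, e.ncard = 2)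
    {f : X → α} (hf : ∀ u v, (graphOf E).Adj u v → f u ≠ f v) :
    IsProperColoring E f := by
  intro e he
  obtain ⟨x, y, hxy, rfl⟩ := Set.ncard_eq_two.mp (h2 e he)
  exact ⟨x, by simp, y, by simp, hf x y ⟨hxy, he⟩⟩

lemma exists_odd_closed_walk {X : Type*} (G : SimpleGraph X)
    (h : ∀ c : X → Fin 2, ∃ u v, G.Adj u v ∧ c u = c v) :
    ∃ (a : X) (w : G.Walk a a), Odd w.length := by
  classical
  let s : Setoid X := ⟨G.Reachable, ⟨fun _ => SimpleGraph.Reachable.refl _,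
    fun h => h.symm, fun h1 h2 => h1.trans h2⟩⟩
  let rep : X → X := fun v => (Quotient.mk s v).out
  have hrep : ∀ v, G.Reachable (rep v) v := fun v => Quotient.mk_out v
  let wk : ∀ v, G.Walk (rep v) v := fun v => (hrep v).some
  let c : X → Fin 2 := fun v => if Even (wk v).length then 0 else 1
  obtain ⟨u, v, hadj, hc⟩ := h c
  have hr : rep u = rep v := by
    have : (Quotient.mk s u) = (Quotient.mk s v) := Quotient.sound hadj.reachable
    simp only [rep, this]
  -- build the closed walk
  refine ⟨rep u, (wk u).append (SimpleGraph.Walk.cons hadj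
    (((wk v).copy hr.symm rfl).reverse)), ?_⟩
  have hpar : Even (wk u).length ↔ Even (wk v).length := by
    by_cases h1 : Even (wk u).length <;> by_cases h2 : Even (wk v).length <;>
      simp only [c, h1, h2, if_true, if_false] at hc ⊢ <;> simp_all
  simp only [SimpleGraph.Walk.length_append, SimpleGraph.Walk.length_cons,
    SimpleGraph.Walk.length_reverse, SimpleGraph.Walk.length_copy]
  rcases Nat.even_or_odd (wk u).length with he | ho
  · have h2 := hpar.mp he
    rw [Nat.even_iff] at he h2
    rw [Nat.odd_iff]
    omega
  · have h2 : ¬ Even (wk v).length := fun hv => (Nat.not_even_iff_odd.mpr ho) (hpar.mpr hv)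
    rw [Nat.odd_iff] at ho ⊢
    rw [Nat.even_iff] at h2
    omega

lemma two_pow_mono : Monotone (fun c : Cardinal.{u} => (2 : Cardinal.{u}) ^ c) :=
  fun _ _ h => Cardinal.power_le_power_left (by norm_num) h

lemma tower_mono (r : ℕ) {μ μ' : Cardinal.{u}} (h : μ ≤ μ') : tower r μ ≤ tower r μ' :=
  two_pow_mono.iterate r (max_le_max h le_rfl)

lemma le_tower (r : ℕ) (μ : Cardinal.{u}) : max μ ℵ₀ ≤ tower r μ := by
  induction r with
  | zero => exact le_rfl
  | succ n ih =>
    refine le_trans ih ?_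
    show _ ≤ (fun c => (2:Cardinal.{u}) ^ c)^[n+1] (max μ ℵ₀)
    rw [Function.iterate_succ_apply']
    exact le_of_lt (Cardinal.cantor _)

lemma strictMono_snoc {O : Type*} [LinearOrder O] {r : ℕ} {f : Fin r → O} (hf : StrictMono f)
    {z : O} (hz : ∀ i, f i < z) : StrictMono (Fin.snoc f z) := by
  intro a b hab
  rcases Fin.eq_castSucc_or_eq_last b with ⟨b', rfl⟩ | rfl
  · rcases Fin.eq_castSucc_or_eq_last a with ⟨a', rfl⟩ | rfl
    · simp only [Fin.snoc_castSucc]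
      exact hf (by exact_mod_cast hab)
    · exact absurd hab (asymm (Fin.castSucc_lt_last b'))
  · rcases Fin.eq_castSucc_or_eq_last a with ⟨a', rfl⟩ | rfl
    · simp only [Fin.snoc_castSucc, Fin.snoc_last]
      exact hz a'
    · exact absurd hab (lt_irrefl _)

lemma key_shift : ∀ (r : ℕ) (O : Type u) [LinearOrder O] (β : Type u)
    (g : {A : Fin (r + 1) → O // StrictMono A} → β),
    (∀ A B, A ≠ B → ShiftRel A.1 B.1 → g A ≠ g B) → #O ≤ tower (r + 1) (#β) := by
  intro r
  induction r with
  | zero =>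
    intro O _ β g hg
    have hinj : Function.Injective
        (fun o : O => g ⟨fun _ => o, fun a b hab => absurd (Fin.lt_iff_val_lt_val.mp hab) (by omega)⟩) := by
      intro o o' h
      by_contra hne
      refine hg ⟨fun _ => o, fun a b hab => absurd (Fin.lt_iff_val_lt_val.mp hab) (by omega)⟩
        ⟨fun _ => o', fun a b hab => absurd (Fin.lt_iff_val_lt_val.mp hab) (by omega)⟩ ?_ ?_ h
      · intro heq
        have := congrArg (fun A => A.1 0) heq
        exact hne this
      · intro i hi
        omega
    calc #O ≤ #β := Cardinal.mk_le_of_injective hinj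
    _ ≤ tower 1 (#β) := le_trans (le_max_left _ _) (le_tower 1 _)
  | succ r ih =>
    intro O _ β g hg
    classical
    let IT := {A : Fin (r + 2) → O // StrictMono A}
    let MT := {M : Fin (r + 1) → O // StrictMono M}
    let Init : IT → MT → Prop :=
      fun T M => ∀ (i : ℕ) (h : i < r + 1), T.1 ⟨i, by omega⟩ = M.1 ⟨i, h⟩
    let Tail : IT → MT → Prop :=
      fun T M => ∀ (i : ℕ) (h : i < r + 1), T.1 ⟨i + 1, by omega⟩ = M.1 ⟨i, h⟩
    let Cm : MT → Set β := fun M => {c : β | ∃ T, Tail T M ∧ g T = c}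
    let Cp : MT → Set β := fun M => {c : β | ∃ T, Init T M ∧ g T = c}
    have hdisj : ∀ M, Cm M ∩ Cp M = ∅ := by
      intro M
      ext c
      simp only [Set.mem_inter_iff, Set.mem_empty_iff_false, iff_false, not_and]
      rintro ⟨T1, hT1, rfl⟩ ⟨T2, hT2, hc⟩
      refine hg T1 T2 ?_ ?_ hc.symm
      · intro heq
        have h0 : T1.1 ⟨0, by omega⟩ < T1.1 ⟨1, by omega⟩ := T1.2 (by simp [Fin.lt_iff_val_lt_val])
        rw [hT1 0 (by omega)] at h0
        rw [heq] at h0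
        rw [hT2 0 (by omega)] at h0
        exact lt_irrefl _ h0
      · intro i hi
        have hi' : i < r + 1 := by omega
        rw [hT2 i hi', hT1 i hi']
    let h' : MT → Set β × Set β := fun M => (Cm M, Cp M)
    have hproper : ∀ M M', M ≠ M' → ShiftRel M.1 M'.1 → h' M ≠ h' M' := by
      intro M M' hne hshift heq
      have hCm : Cm M = Cm M' := congrArg Prod.fst heq
      have hCp : Cp M = Cp M' := congrArg Prod.snd heq
      by_cases hlt : M.1 ⟨r, by omega⟩ < M'.1 ⟨r, by omega⟩
      · -- glue T := snoc M (M' last)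
        have hzlt : ∀ i, M.1 i < M'.1 ⟨r, by omega⟩ :=
          fun i => lt_of_le_of_lt (M.2.monotone (Fin.le_last i)) hlt
        let T : IT := ⟨Fin.snoc M.1 (M'.1 ⟨r, by omega⟩), strictMono_snoc M.2 hzlt⟩
        have hInit : Init T M := by
          intro i hi
          have hcast : (⟨i, by omega⟩ : Fin (r + 2)) = Fin.castSucc ⟨i, hi⟩ := rfl
          show (Fin.snoc M.1 (M'.1 ⟨r, by omega⟩) : Fin (r+2) → O) ⟨i, by omega⟩ = _
          rw [hcast, Fin.snoc_castSucc]
        have hTail : Tail T M' := by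
          intro i hi
          show (Fin.snoc M.1 (M'.1 ⟨r, by omega⟩) : Fin (r+2) → O) ⟨i + 1, by omega⟩ = _
          by_cases hi2 : i + 1 < r + 1
          · have hcast : (⟨i + 1, by omega⟩ : Fin (r + 2)) = Fin.castSucc ⟨i + 1, hi2⟩ := rfl
            rw [hcast, Fin.snoc_castSucc]
            exact (hshift i hi2).symm
          · have hir : i = r := by omega
            have hcast : (⟨i + 1, by omega⟩ : Fin (r + 2)) = Fin.last (r + 1) := by
              apply Fin.ext; simp [Fin.last]; omega
            rw [hcast, Fin.snoc_last]
            have hidx : (⟨i, hi⟩ : Fin (r + 1)) = ⟨r, by omega⟩ := by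
              apply Fin.ext; simp; omega
            rw [hidx]
        have hmem1 : g T ∈ Cp M := ⟨T, hInit, rfl⟩
        have hmem2 : g T ∈ Cm M' := ⟨T, hTail, rfl⟩
        rw [hCp] at hmem1
        have : g T ∈ Cm M' ∩ Cp M' := ⟨hmem2, hmem1⟩
        rw [hdisj M'] at this
        exact this
      · -- then r = 0 and M' 0 < M 0
        have hr0 : r = 0 := by
          by_contra h0
          have h1 : 0 < r := Nat.pos_of_ne_zero h0
          have h2 : M'.1 ⟨r - 1, by omega⟩ = M.1 ⟨r, by omega⟩ := by
            have := hshift (r - 1) (by omega)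
            convert this using 3 <;> omega
          have h3 : M'.1 ⟨r - 1, by omega⟩ < M'.1 ⟨r, by omega⟩ :=
            M'.2 (by simp [Fin.lt_iff_val_lt_val]; omega)
          rw [h2] at h3
          exact hlt h3
        subst hr0
        have hne0 : M.1 ⟨0, by omega⟩ ≠ M'.1 ⟨0, by omega⟩ := by
          intro heq0
          apply hne
          apply Subtype.ext
          funext i
          have : i = ⟨0, by omega⟩ := by apply Fin.ext; omega
          rw [this]; exact heq0
        have hlt' : M'.1 ⟨0, by omega⟩ < M.1 ⟨0, by omega⟩ :=
          lt_of_le_of_ne (not_lt.mp hlt) (fun h => hne0 h.symm)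
        have hzlt : ∀ i, M'.1 i < M.1 ⟨0, by omega⟩ := by
          intro i
          have : i = ⟨0, by omega⟩ := by apply Fin.ext; omega
          rw [this]; exact hlt'
        let T : IT := ⟨Fin.snoc M'.1 (M.1 ⟨0, by omega⟩), strictMono_snoc M'.2 hzlt⟩
        have hInit : Init T M' := by
          intro i hi
          have hi0 : i = 0 := by omega
          subst hi0
          have hcast : (⟨0, by omega⟩ : Fin (0 + 2)) = Fin.castSucc ⟨0, hi⟩ := rfl
          show (Fin.snoc M'.1 (M.1 ⟨0, by omega⟩) : Fin (0+2) → O) ⟨0, by omega⟩ = _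
          rw [hcast, Fin.snoc_castSucc]
        have hTail : Tail T M := by
          intro i hi
          have hi0 : i = 0 := by omega
          subst hi0
          have hcast : (⟨0 + 1, by omega⟩ : Fin (0 + 2)) = Fin.last (0 + 1) := rfl
          show (Fin.snoc M'.1 (M.1 ⟨0, by omega⟩) : Fin (0+2) → O) ⟨0 + 1, by omega⟩ = _
          rw [hcast, Fin.snoc_last]
        have hmem1 : g T ∈ Cp M' := ⟨T, hInit, rfl⟩
        have hmem2 : g T ∈ Cm M := ⟨T, hTail, rfl⟩
        rw [← hCp] at hmem1
        have : g T ∈ Cm M ∩ Cp M := ⟨hmem2, hmem1⟩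
        rw [hdisj M] at this
        exact this
    have hIH := ih O (Set β × Set β) h' hproper
    refine le_trans hIH ?_
    have h1 : #(Set β × Set β) ≤ 2 ^ (max (#β) ℵ₀) := by
      have hp : #(Set β × Set β) = 2 ^ (#β) * 2 ^ (#β) := by
        simp [Cardinal.mk_prod, Cardinal.mk_set]
      rw [hp]
      have h2 : (2 : Cardinal.{u}) ^ (#β) ≤ 2 ^ (max (#β) ℵ₀) := two_pow_mono (le_max_left _ _)
      have hinf : ℵ₀ ≤ (2 : Cardinal.{u}) ^ (max (#β) ℵ₀) :=
        le_trans (le_of_lt (Cardinal.cantor _)) (two_pow_mono (le_max_right _ _))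
      calc (2:Cardinal.{u}) ^ (#β) * 2 ^ (#β) ≤ 2 ^ (max (#β) ℵ₀) * 2 ^ (max (#β) ℵ₀) :=
        mul_le_mul' h2 h2
      _ = 2 ^ (max (#β) ℵ₀) := Cardinal.mul_eq_self hinf
    have hinf : ℵ₀ ≤ (2 : Cardinal.{u}) ^ (max (#β) ℵ₀) :=
      le_trans (le_of_lt (Cardinal.cantor _)) (two_pow_mono (le_max_right _ _))
    calc tower (r + 1) (#(Set β × Set β))
        = (fun c => (2:Cardinal.{u}) ^ c)^[r+1] (max (#(Set β × Set β)) ℵ₀) := rfl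
      _ ≤ (fun c => (2:Cardinal.{u}) ^ c)^[r+1] ((2:Cardinal.{u}) ^ (max (#β) ℵ₀)) :=
          two_pow_mono.iterate (r+1) (max_le h1 hinf)
      _ = tower (r + 2) (#β) := by
          show _ = (fun c => (2:Cardinal.{u}) ^ c)^[r+2] (max (#β) ℵ₀)
          simp only [Function.iterate_succ_apply]

lemma no_short_odd_closed_walk {O : Type u} [LinearOrder O] {r L : ℕ}
    (hL : L + 1 ≤ r) (hodd : Odd L) (w : ℕ → (Fin r → O))
    (hmono : ∀ t, StrictMono (w t)) (hclosed : w L = w 0)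
    (hstep : ∀ t < L, ShiftRel (w t) (w (t + 1)) ∨ ShiftRel (w (t + 1)) (w t)) :
    False := by
  classical
  -- signs
  let σ : ℕ → ℤ := fun t => if ShiftRel (w t) (w (t + 1)) then 1 else -1
  have hσ : ∀ t < L, (σ t = 1 ∧ ShiftRel (w t) (w (t + 1))) ∨
      (σ t = -1 ∧ ShiftRel (w (t + 1)) (w t)) := by
    intro t ht
    by_cases h : ShiftRel (w t) (w (t + 1))
    · exact Or.inl ⟨if_pos h, h⟩
    · exact Or.inr ⟨if_neg h, (hstep t ht).resolve_left h⟩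
  have hσabs : ∀ t, σ t = 1 ∨ σ t = -1 := by
    intro t
    by_cases h : ShiftRel (w t) (w (t + 1))
    · exact Or.inl (if_pos h)
    · exact Or.inr (if_neg h)
  let p : ℕ → ℤ := fun t => ∑ i ∈ Finset.range t, σ i
  have hp0 : p 0 = 0 := by simp [p]
  have hpsucc : ∀ t, p (t + 1) = p t + σ t := by
    intro t; simp [p, Finset.sum_range_succ]
  -- |p a - p b| ≤ a - b for b ≤ a
  have hpdiff : ∀ a b : ℕ, b ≤ a → |p a - p b| ≤ (a : ℤ) - b := by
    intro a b hba
    induction a with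
    | zero =>
      have : b = 0 := by omega
      subst this; simp
    | succ a iha =>
      rcases Nat.lt_or_ge b (a + 1) with hlt | hge
      · have hba' : b ≤ a := by omega
        have := iha hba'
        have h1 := hσabs a
        rw [hpsucc a]
        have : |p a + σ a - p b| ≤ |p a - p b| + |σ a| := by
          have : p a + σ a - p b = (p a - p b) + σ a := by ring
          rw [this]
          exact abs_add_le _ _
        have habs : |σ a| = 1 := by rcases h1 with h | h <;> simp [h]
        push_cast
        omega
      · have : b = a + 1 := by omega
        subst this; simp
  -- max and min of p on range (L+1)
  have hne : ((Finset.range (L + 1)).image p).Nonempty := by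
    simp [Finset.image_nonempty]
  set M := ((Finset.range (L + 1)).image p).max' hne with hM
  set m := ((Finset.range (L + 1)).image p).min' hne with hm
  have hpM : ∀ t ≤ L, p t ≤ M := by
    intro t ht
    exact Finset.le_max' _ _ (Finset.mem_image_of_mem p (Finset.mem_range.mpr (by omega)))
  have hpm : ∀ t ≤ L, m ≤ p t := by
    intro t ht
    exact Finset.min'_le _ _ (Finset.mem_image_of_mem p (Finset.mem_range.mpr (by omega)))
  have hMm : M - m ≤ (L : ℤ) := by
    obtain ⟨tM, htM, htMeq⟩ := Finset.mem_image.mp (((Finset.range (L + 1)).image p).max'_mem hne)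
    obtain ⟨tm, htm, htmeq⟩ := Finset.mem_image.mp (((Finset.range (L + 1)).image p).min'_mem hne)
    rw [Finset.mem_range] at htM htm
    rcases Nat.le_total tm tM with h | h
    · have := hpdiff tM tm h
      rw [htMeq, htmeq] at this
      have h2 := abs_le.mp this
      have : (tM : ℤ) - tm ≤ L := by push_cast; omega
      omega
    · have := hpdiff tm tM h
      rw [htMeq, htmeq] at this
      have h2 := abs_le.mp this
      have : (tm : ℤ) - tM ≤ L := by push_cast; omega
      omega
  -- index function
  let idx : ℕ → ℤ := fun t => 1 + M - p t
  have hidx1 : ∀ t ≤ L, 1 ≤ idx t := by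
    intro t ht; have := hpM t ht; simp only [idx]; omega
  have hidxr : ∀ t ≤ L, idx t ≤ r := by
    intro t ht
    have := hpm t ht
    have : idx t ≤ 1 + M - m := by simp only [idx]; omega
    have hr : (L : ℤ) + 1 ≤ r := by exact_mod_cast hL
    omega
  -- Fin-valued index
  have hidxnat : ∀ t ≤ L, (idx t).toNat - 1 < r := by
    intro t ht
    have h1 := hidx1 t ht
    have h2 := hidxr t ht
    omega
  let fidx : ∀ t, t ≤ L → Fin r := fun t ht => ⟨(idx t).toNat - 1, hidxnat t ht⟩
  -- the invariant
  have hinv : ∀ t (ht : t ≤ L), w t (fidx t ht) = w 0 (fidx 0 (Nat.zero_le L)) := by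
    intro t
    induction t with
    | zero => intro _; rfl
    | succ t iht =>
      intro ht
      have ht' : t ≤ L := by omega
      have htL : t < L := by omega
      rw [← iht ht']
      rcases hσ t htL with ⟨hs, hsh⟩ | ⟨hs, hsh⟩
      · -- forward: idx (t+1) = idx t - 1
        have hidxe : idx (t + 1) = idx t - 1 := by
          simp only [idx, hpsucc t, hs]; ring
        have h1 := hidx1 (t + 1) ht
        have h2 := hidxr t ht'
        have h1t := hidx1 t ht'
        -- ShiftRel (w t) (w (t+1)) : (w (t+1)) ⟨i⟩ = (w t) ⟨i+1⟩ for i + 1 < r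
        have hi : ((idx (t + 1)).toNat - 1) + 1 < r := by omega
        have := hsh ((idx (t + 1)).toNat - 1) hi
        show w (t + 1) (fidx (t + 1) ht) = w t (fidx t ht')
        have hfeq : (⟨(idx (t+1)).toNat - 1 + 1, hi⟩ : Fin r) = fidx t ht' := by
          apply Fin.ext
          show (idx (t+1)).toNat - 1 + 1 = (idx t).toNat - 1
          omega
        rw [show fidx (t+1) ht = (⟨(idx (t+1)).toNat - 1, Nat.lt_of_succ_lt hi⟩ : Fin r) from rfl]
        rw [this, hfeq]
      · -- backward: idx (t+1) = idx t + 1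
        have hidxe : idx (t + 1) = idx t + 1 := by
          simp only [idx, hpsucc t, hs]; ring
        have h1 := hidx1 t ht'
        have h2 := hidxr (t + 1) ht
        -- ShiftRel (w (t+1)) (w t) : (w t) ⟨i⟩ = (w (t+1)) ⟨i+1⟩ for i + 1 < r
        have hi : ((idx t).toNat - 1) + 1 < r := by omega
        have := hsh ((idx t).toNat - 1) hi
        show w (t + 1) (fidx (t + 1) ht) = w t (fidx t ht')
        have hfeq : (⟨(idx t).toNat - 1 + 1, hi⟩ : Fin r) = fidx (t + 1) ht := by
          apply Fin.ext
          show (idx t).toNat - 1 + 1 = (idx (t+1)).toNat - 1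
          omega
        rw [← hfeq, ← this]
  -- parity
  have hpar : ∀ t ≤ L, (p t + t) % 2 = 0 := by
    intro t
    induction t with
    | zero => intro _; simp [hp0]
    | succ t iht =>
      intro ht
      have ht' : t ≤ L := by omega
      have h3 := iht ht'
      rw [hpsucc t]
      rcases hσabs t with h | h <;> rw [h] <;> push_cast <;> push_cast at h3 <;> omega
  -- conclude
  have hL0 := hinv L le_rfl
  rw [hclosed] at hL0
  have hfeq : fidx L le_rfl = fidx 0 (Nat.zero_le L) := (hmono 0).injective hL0
  have hne0 : p L ≠ 0 := by
    obtain ⟨k, hk⟩ := hodd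
    have hj := hpar L le_rfl
    intro h0
    rw [h0] at hj
    subst hk
    push_cast at hj
    omega
  have : (idx L).toNat - 1 = (idx 0).toNat - 1 := congrArg Fin.val hfeq
  have h1 := hidx1 L le_rfl
  have h2 := hidx1 0 (Nat.zero_le L)
  have : idx L = idx 0 := by omega
  simp only [idx, hp0] at this
  omega

lemma exists_proper_nat_coloring (n : ℕ) (hn : 1 ≤ n) (κ : Cardinal.{u}) :
    ∀ (V : Type u), #V = κ → ∀ (Adj : V → V → Prop), Symmetric Adj → (∀ v, ¬Adj v v) →
    (∀ S : Finset V, S.card = n → {v | ∀ s ∈ S, Adj v s}.Finite) →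
    ∃ f : V → ℕ, ∀ u v, Adj u v → f u ≠ f v := by
  induction κ using WellFoundedLT.induction with
  | _ κ IH =>
  intro V hV Adj hsymm hirr hFin
  classical
  by_cases hsmall : κ ≤ ℵ₀
  · have : Countable V := Cardinal.mk_le_aleph0_iff.mp (hV ▸ hsmall)
    obtain ⟨f, hf⟩ := (countable_iff_exists_injective V).mp this
    exact ⟨f, fun u v huv heq => hirr v (hf heq ▸ huv)⟩
  have hbig : ℵ₀ < κ := not_le.mp hsmall
  obtain ⟨e⟩ : Nonempty (κ.ord.ToType ≃ V) := by
    rw [← Cardinal.eq, Cardinal.mk_ord_toType, hV]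
  haveI hwfι : WellFoundedLT κ.ord.ToType := wellFoundedLT_toType _
  -- the closure machinery
  let N : Finset V → Set V := fun S => {v | ∀ s ∈ S, Adj v s}
  let step : Set V → Set V := fun X => X ∪ ⋃ (S : {S : Finset V // ↑S ⊆ X ∧ S.card = n}), N S.1
  let cl : Set V → Set V := fun X => ⋃ (k : ℕ), step^[k] X
  have hstep_sub : ∀ X, X ⊆ step X := fun X => Set.subset_union_left
  have hstep_mono : ∀ X Y, X ⊆ Y → step X ⊆ step Y := by
    intro X Y hXY
    refine Set.union_subset_union hXY ?_
    intro v hv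
    simp only [Set.mem_iUnion] at hv ⊢
    obtain ⟨⟨S, hS1, hS2⟩, hv⟩ := hv
    exact ⟨⟨S, hS1.trans hXY, hS2⟩, hv⟩
  have hiter_arg : ∀ k (X Y : Set V), X ⊆ Y → step^[k] X ⊆ step^[k] Y := by
    intro k
    induction k with
    | zero => intro X Y h; exact h
    | succ k ihk =>
      intro X Y h
      rw [Function.iterate_succ_apply', Function.iterate_succ_apply']
      exact hstep_mono _ _ (ihk _ _ h)
  have hiter_mono : ∀ (X : Set V) k l, k ≤ l → step^[k] X ⊆ step^[l] X := by
    intro X k l hkl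
    induction l with
    | zero =>
      have hk0 : k = 0 := Nat.le_zero.mp hkl
      subst hk0; exact subset_rfl
    | succ l ihl =>
      rcases Nat.lt_or_ge k (l + 1) with h | h
      · refine (ihl (by omega)).trans ?_
        rw [Function.iterate_succ_apply']
        exact hstep_sub _
      · have : k = l + 1 := by omega
        subst this; exact subset_rfl
  have hsub_cl : ∀ X, X ⊆ cl X := fun X v hv => Set.mem_iUnion.mpr ⟨0, hv⟩
  have hcl_mono : ∀ X Y, X ⊆ Y → cl X ⊆ cl Y := by
    intro X Y hXY v hv
    obtain ⟨k, hk⟩ := Set.mem_iUnion.mp hv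
    exact Set.mem_iUnion.mpr ⟨k, hiter_arg k X Y hXY hk⟩
  have hcl_closed : ∀ (X : Set V) (S : Finset V), ↑S ⊆ cl X → S.card = n → N S ⊆ cl X := by
    intro X S hS hcard
    have hex : ∀ s ∈ S, ∃ k, s ∈ step^[k] X := fun s hs => Set.mem_iUnion.mp (hS hs)
    let g : V → ℕ := fun s => if h : ∃ k, s ∈ step^[k] X then h.choose else 0
    have hg : ∀ s ∈ S, s ∈ step^[g s] X := by
      intro s hs
      have h := hex s hs
      simp only [g, dif_pos h]
      exact h.choose_spec
    let K := S.sup g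
    have hSK : ↑S ⊆ step^[K] X := by
      intro s hs
      exact hiter_mono X (g s) K (Finset.le_sup hs) (hg s hs)
    intro v hv
    refine Set.mem_iUnion.mpr ⟨K + 1, ?_⟩
    rw [Function.iterate_succ_apply']
    exact Set.mem_union_right _ (Set.mem_iUnion.mpr ⟨⟨S, hSK, hcard⟩, hv⟩)
  -- cardinality of the closure
  have hstep_card : ∀ Y : Set V, #(step Y) ≤ max (#Y) ℵ₀ := by
    intro Y
    have hY : #(Y : Set V) ≤ max (#Y) ℵ₀ := le_max_left _ _
    have hsubty : #{S : Finset V // ↑S ⊆ Y ∧ S.card = n} ≤ max (#Y) ℵ₀ := by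
      have hinj : Function.Injective
          (fun S : {S : Finset V // ↑S ⊆ Y ∧ S.card = n} =>
            (S.1.subtype (· ∈ Y) : Finset Y)) := by
        intro S T hST
        apply Subtype.ext
        have hST' : (S.1.subtype (· ∈ Y) : Finset Y) = T.1.subtype (· ∈ Y) := hST
        have h1 := congrArg (fun F : Finset Y => F.map (Function.Embedding.subtype _)) hST'
        simp only [Finset.subtype_map] at h1
        rwa [Finset.filter_true_of_mem (fun x hx => S.2.1 hx),
          Finset.filter_true_of_mem (fun x hx => T.2.1 hx)] at h1
      refine le_trans (Cardinal.mk_le_of_injective hinj) ?_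
      rcases finite_or_infinite (Y : Set V) with hfin | hinf
      · haveI := hfin
        haveI : Fintype (Y : Set V) := Fintype.ofFinite _
        haveI : Finite (Finset (Y : Set V)) := Finite.of_fintype _
        exact le_trans (le_of_lt (Cardinal.lt_aleph0_of_finite _)) (le_max_right _ _)
      · rw [Cardinal.mk_finset_of_infinite]
        exact le_max_left _ _
    have hunion : #(⋃ (S : {S : Finset V // ↑S ⊆ Y ∧ S.card = n}), N S.1) ≤ max (#Y) ℵ₀ := by
      refine le_trans (Cardinal.mk_iUnion_le _) ?_
      have hNfin : ∀ (S : {S : Finset V // ↑S ⊆ Y ∧ S.card = n}), #(N S.1) ≤ ℵ₀ :=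
        fun S => le_of_lt (hFin S.1 S.2.2).lt_aleph0
      have hsup : ⨆ (S : {S : Finset V // ↑S ⊆ Y ∧ S.card = n}), #(N S.1) ≤ ℵ₀ :=
        ciSup_le' hNfin
      have hmul : #{S : Finset V // ↑S ⊆ Y ∧ S.card = n} *
          (⨆ (S : {S : Finset V // ↑S ⊆ Y ∧ S.card = n}), #(N S.1)) ≤
          max (#Y) ℵ₀ * ℵ₀ := mul_le_mul' hsubty hsup
      refine le_trans hmul ?_
      have hMinf : ℵ₀ ≤ max (#Y) ℵ₀ := le_max_right _ _
      calc max (#Y) ℵ₀ * ℵ₀ ≤ max (#Y) ℵ₀ * max (#Y) ℵ₀ := mul_le_mul' le_rfl hMinf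
        _ = max (#Y) ℵ₀ := Cardinal.mul_eq_self hMinf
    show #(Y ∪ ⋃ (S : {S : Finset V // ↑S ⊆ Y ∧ S.card = n}), N S.1 : Set V) ≤ max (#Y) ℵ₀
    refine le_trans (Cardinal.mk_union_le _ _) ?_
    have hMinf : ℵ₀ ≤ max (#Y) ℵ₀ := le_max_right _ _
    calc #(Y : Set V) + #(⋃ (S : {S : Finset V // ↑S ⊆ Y ∧ S.card = n}), N S.1 : Set V)
        ≤ max (#Y) ℵ₀ + max (#Y) ℵ₀ := add_le_add hY hunion
      _ = max (#Y) ℵ₀ := Cardinal.add_eq_self hMinf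
  have hiter_card : ∀ (X : Set V) (k : ℕ), #(step^[k] X) ≤ max (#X) ℵ₀ := by
    intro X k
    induction k with
    | zero => exact le_max_left _ _
    | succ k ihk =>
      rw [Function.iterate_succ_apply']
      refine le_trans (hstep_card _) ?_
      exact max_le (le_trans ihk le_rfl) (le_max_right _ _)
  have hcl_card : ∀ X : Set V, #(cl X) ≤ max (#X) ℵ₀ := by
    intro X
    have hrw : cl X = ⋃ (k : ULift.{u} ℕ), step^[k.down] X := by
      apply Set.Subset.antisymm
      · intro v hv
        obtain ⟨k, hk⟩ := Set.mem_iUnion.mp hv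
        exact Set.mem_iUnion.mpr ⟨⟨k⟩, hk⟩
      · intro v hv
        obtain ⟨k, hk⟩ := Set.mem_iUnion.mp hv
        exact Set.mem_iUnion.mpr ⟨k.down, hk⟩
    rw [hrw]
    refine le_trans (Cardinal.mk_iUnion_le _) ?_
    have h1 : #(ULift.{u} ℕ) = ℵ₀ := Cardinal.mk_denumerable _
    have h2 : ⨆ (k : ULift.{u} ℕ), #(step^[k.down] X) ≤ max (#X) ℵ₀ :=
      ciSup_le' (fun k => hiter_card X k.down)
    rw [h1]
    have hMinf : ℵ₀ ≤ max (#X) ℵ₀ := le_max_right _ _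
    calc ℵ₀ * (⨆ (k : ULift.{u} ℕ), #(step^[k.down] X)) ≤ max (#X) ℵ₀ * max (#X) ℵ₀ :=
        mul_le_mul' hMinf h2
      _ = max (#X) ℵ₀ := Cardinal.mul_eq_self hMinf
  
  -- the filtration
  let Vset : κ.ord.ToType → Set V := fun a => cl (e '' Set.Iic a)
  have hVmono : ∀ a b, a ≤ b → Vset a ⊆ Vset b := fun a b hab =>
    hcl_mono _ _ (Set.image_mono (Set.Iic_subset_Iic.mpr hab))
  have hVmem : ∀ v, v ∈ Vset (e.symm v) := fun v =>
    hsub_cl _ ⟨e.symm v, Set.mem_Iic.mpr le_rfl, by simp⟩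
  have hVcard : ∀ a, #(Vset a) < κ := by
    intro a
    refine lt_of_le_of_lt (hcl_card _) ?_
    have h1 : #(e '' Set.Iic a) ≤ #(Set.Iic a) := Cardinal.mk_image_le
    have h2 : #(Set.Iic a) < κ := by
      rw [← Set.Iio_insert]
      refine lt_of_le_of_lt Cardinal.mk_insert_le ?_
      exact Cardinal.add_lt_of_lt (le_of_lt hbig) (Cardinal.mk_Iio_toType_ord_lt a)
        (lt_trans Cardinal.one_lt_aleph0 hbig)
    exact max_lt (lt_of_le_of_lt h1 h2) hbig
  -- rank
  have hrset : ∀ v : V, {a | v ∈ Vset a}.Nonempty := fun v => ⟨e.symm v, hVmem v⟩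
  let rank : V → κ.ord.ToType := fun v => hwfι.wf.min {a | v ∈ Vset a} (hrset v)
  have hrank_mem : ∀ v, v ∈ Vset (rank v) := fun v => hwfι.wf.min_mem _ (hrset v)
  have hrank_min : ∀ v b, b < rank v → v ∉ Vset b := fun v b hb hmem =>
    hwfι.wf.not_lt_min _ hmem hb
  -- the back sets
  let back : V → Set V := fun v => {u | Adj u v ∧ rank u < rank v}
  have hback_noS : ∀ v, ¬∃ S : Finset V, ↑S ⊆ back v ∧ S.card = n := by
    rintro v ⟨S, hsub, hcard⟩
    have hSne : S.Nonempty := Finset.card_pos.mp (by omega)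
    have hne2 : (S.image rank).Nonempty := hSne.image _
    set b := (S.image rank).max' hne2 with hb
    have hblt : b < rank v := by
      obtain ⟨w, hw, hwb⟩ := Finset.mem_image.mp ((S.image rank).max'_mem hne2)
      rw [hb, ← hwb]
      exact (hsub hw).2
    have hSV : ↑S ⊆ Vset b := by
      intro w hw
      exact hVmono _ _ (Finset.le_max' _ _ (Finset.mem_image_of_mem rank hw)) (hrank_mem w)
    have hvN : v ∈ N S := fun s hs => hsymm (hsub hs).1
    have : v ∈ Vset b := hcl_closed _ S hSV hcard hvN
    exact hrank_min v b hblt this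
  have hback_fin : ∀ v, (back v).Finite := by
    intro v
    by_contra hinf
    have hinf' : (back v).Infinite := hinf
    obtain ⟨S, hS1, hS2⟩ := hinf'.exists_subset_card_eq n
    exact hback_noS v ⟨S, hS1, hS2⟩
  have hback_card : ∀ v, (back v).ncard ≤ n - 1 := by
    intro v
    by_contra hcard
    have hge : n ≤ (back v).ncard := by omega
    obtain ⟨t, ht1, ht2⟩ := Set.exists_subset_card_eq hge
    have htfin : t.Finite := (hback_fin v).subset ht1
    refine hback_noS v ⟨htfin.toFinset, ?_, ?_⟩
    · rw [Set.Finite.coe_toFinset]; exact ht1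
    · rw [← Set.ncard_eq_toFinset_card t htfin]
      exact ht2
  -- layers
  let Lset : κ.ord.ToType → Set V := fun a => {v | rank v = a}
  have hLsub : ∀ a, Lset a ⊆ Vset a := fun a v hv => hv ▸ hrank_mem v
  have hLcol : ∀ a, ∃ g : (Lset a) → ℕ, ∀ x y : (Lset a), Adj x.1 y.1 → g x ≠ g y := by
    intro a
    have hlt : #(Lset a) < κ :=
      lt_of_le_of_lt (Cardinal.mk_le_mk_of_subset (hLsub a)) (hVcard a)
    refine IH (#(Lset a)) hlt (Lset a) rfl (fun x y => Adj x.1 y.1)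
      (fun x y h => hsymm h) (fun x h => hirr x.1 h) ?_
    intro S hS
    have h2 : (Subtype.val '' {x : (Lset a) | ∀ s ∈ S, Adj x.1 s.1}) ⊆
        {w : V | ∀ s ∈ S.image Subtype.val, Adj w s} := by
      rintro w ⟨x, hx, rfl⟩ s hs
      obtain ⟨s', hs', rfl⟩ := Finset.mem_image.mp hs
      exact hx s' hs'
    have h3 : {w : V | ∀ s ∈ S.image Subtype.val, Adj w s}.Finite := by
      refine hFin (S.image Subtype.val) ?_
      rw [Finset.card_image_of_injective _ Subtype.val_injective]
      exact hS
    have h4 := h3.subset h2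
    exact Set.Finite.of_finite_image h4 (Set.injOn_of_injective Subtype.val_injective)
  choose G hG using hLcol
  let inner : V → ℕ := fun v => G (rank v) ⟨v, rfl⟩
  have hinner : ∀ (v : V) (a) (h : rank v = a), inner v = G a ⟨v, h⟩ := by
    intro v a h
    subst h
    rfl
  have hinner_ne : ∀ u v, Adj u v → rank u = rank v → inner u ≠ inner v := by
    intro u v hadj hru
    rw [hinner u (rank v) hru, hinner v (rank v) rfl]
    exact hG (rank v) ⟨u, hru⟩ ⟨v, rfl⟩ hadj
  -- final colouring by well-founded recursion on rank
  let rel : V → V → Prop := fun u v => rank u < rank v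
  have hrelwf : WellFounded rel := InvImage.wf rank hwfι.wf
  have hsel : ∀ (v : V) (rec : ∀ u, rel u v → ℕ × Fin n),
      ∃ k : Fin n, ∀ u (hu : Adj u v) (hr : rel u v), rec u hr ≠ (inner v, k) := by
    intro v rec
    by_contra hno
    push_neg at hno
    choose uf hadj hrel heq using hno
    haveI : Finite (back v) := (hback_fin v).to_subtype
    have hemb : Function.Injective (fun k : Fin n => (⟨uf k, hadj k, hrel k⟩ : (back v))) := by
      intro k k' hkk
      have huf : uf k = uf k' := congrArg Subtype.val hkk
      have h3 : ((inner v, k) : ℕ × Fin n) = (inner v, k') := by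
        rw [← heq k, ← heq k']
        simp only [huf]
      exact (Prod.mk.injEq _ _ _ _ ▸ h3).2
    have hle : n ≤ Nat.card (back v) := by
      have := Nat.card_le_card_of_injective _ hemb
      simpa using this
    rw [Nat.card_coe_set_eq] at hle
    have := hback_card v
    omega
  let F : ∀ v : V, (∀ u, rel u v → ℕ × Fin n) → ℕ × Fin n :=
    fun v rec => (inner v, (hsel v rec).choose)
  let fc : V → ℕ × Fin n := hrelwf.fix F
  have hfc : ∀ v, fc v = F v (fun u _ => fc u) := fun v => hrelwf.fix_eq F v
  have hfc_spec : ∀ v u, Adj u v → ∀ hr : rel u v, fc u ≠ fc v := by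
    intro v u hu hr
    rw [hfc v]
    exact (hsel v (fun u _ => fc u)).choose_spec u hu hr
  have hfc_fst : ∀ v, (fc v).1 = inner v := by
    intro v; rw [hfc v]
  obtain ⟨pair, hpair⟩ := (countable_iff_exists_injective (ℕ × Fin n)).mp inferInstance
  refine ⟨fun v => pair (fc v), ?_⟩
  intro u v huv heq
  have heq2 : fc u = fc v := hpair heq
  rcases lt_trichotomy (rank u) (rank v) with h | h | h
  · exact hfc_spec v u huv h heq2
  · have hne := hinner_ne u v huv h
    rw [← hfc_fst u, ← hfc_fst v] at hne
    exact hne (by rw [heq2])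
  · exact hfc_spec u v (hsymm huv) h heq2.symm

/-! ### the shift graph -/

noncomputable def BigO (r : ℕ) : Type u := (Order.succ (tower.{u} (r + 1) ℵ₀)).ord.ToType

noncomputable instance (r : ℕ) : LinearOrder (BigO.{u} r) :=
  inferInstanceAs (LinearOrder ((Order.succ (tower.{u} (r + 1) ℵ₀)).ord.ToType))

lemma mk_BigO (r : ℕ) : #(BigO.{u} r) = Order.succ (tower.{u} (r + 1) ℵ₀) := by
  unfold BigO
  exact Cardinal.mk_ord_toType _

def ShiftE (r : ℕ) (O : Type u) [LinearOrder O] :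
    Set (Set {A : Fin r → O // StrictMono A}) :=
  {s | ∃ A B, A ≠ B ∧ ShiftRel A.1 B.1 ∧ s = {A, B}}

lemma shiftE_ncard (r : ℕ) (O : Type u) [LinearOrder O] :
    ∀ e ∈ ShiftE r O, e.ncard = 2 := by
  rintro e ⟨A, B, hne, _, rfl⟩
  exact Set.ncard_pair hne

lemma shift_chromatic (r : ℕ) :
    Cardinal.aleph 1 ≤
      chromaticNumber {A : Fin (r + 1) → BigO.{u} r // StrictMono A} (ShiftE (r + 1) (BigO r)) := by
  apply le_csInf
  · refine ⟨#{A : Fin (r + 1) → BigO.{u} r // StrictMono A}, _, id, rfl, ?_⟩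
    rintro e ⟨A, B, hne, _, rfl⟩
    exact ⟨A, by simp, B, by simp, hne⟩
  · rintro b ⟨β, g, hβ, hg⟩
    by_contra hlt
    have hble : b ≤ ℵ₀ := by
      have : b < Cardinal.aleph 1 := not_le.mp hlt
      rwa [← Cardinal.succ_aleph0, Order.lt_succ_iff] at this
    have hgproper : ∀ A B : {A : Fin (r + 1) → BigO.{u} r // StrictMono A},
        A ≠ B → ShiftRel A.1 B.1 → g A ≠ g B := by
      intro A B hne hsh
      exact graph_proper (shiftE_ncard _ _) hg ⟨hne, ⟨A, B, hne, hsh, rfl⟩⟩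
    have hO := key_shift r (BigO.{u} r) β g hgproper
    rw [mk_BigO] at hO
    have h2 : tower.{u} (r + 1) (#β) ≤ tower.{u} (r + 1) ℵ₀ := tower_mono _ (hβ ▸ hble)
    have := le_trans hO h2
    exact absurd this (not_le.mpr (Order.lt_succ _))

/-! ### main theorem -/

/-- **Theorem (Erdős–Hajnal).** A finite graph (given by its vertex type `VF` and its
set `EF` of `2`-element edges) is obligatory — i.e. every graph of chromatic number at
least `ℵ₁` contains a copy of it — if and only if it is bipartite, i.e. properly
`2`-colourable. -/
theorem obligatory_iff_bipartite {VF : Type} [Finite VF] (EF : Set (Set VF))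
    (hEF : ∀ e ∈ EF, e.ncard = 2) :
    (∀ (V : Type u) (E : Set (Set V)), (∀ e ∈ E, e.ncard = 2) →
      Cardinal.aleph 1 ≤ chromaticNumber V E →
      ∃ φ : VF → V, Function.Injective φ ∧ ∀ e ∈ EF, φ '' e ∈ E)
    ↔ ∃ c : VF → Fin 2, IsProperColoring EF c := by
  classical
  constructor
  · -- obligatory → bipartite
    intro hob
    by_contra hc
    have hcol : ∀ c : VF → Fin 2, ∃ u v, (graphOf EF).Adj u v ∧ c u = c v := by
      intro c
      by_contra h2
      push_neg at h2
      exact hc ⟨c, proper_of_graph_proper hEF (fun u v huv => h2 u v huv)⟩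
    obtain ⟨a, wlk, hodd⟩ := exists_odd_closed_walk _ hcol
    set L := wlk.length with hLdef
    obtain ⟨φ, hφinj, hφE⟩ := hob {A : Fin (L + 1) → BigO.{u} L // StrictMono A}
      (ShiftE (L + 1) (BigO L)) (shiftE_ncard _ _) (shift_chromatic L)
    set f : ℕ → VF := wlk.getVert with hfdef
    refine no_short_odd_closed_walk (le_refl (L + 1)) hodd
      (fun t => (φ (f t)).1) (fun t => (φ (f t)).2) ?_ ?_
    · show (φ (f L)).1 = (φ (f 0)).1
      have : f L = f 0 := by
        rw [hfdef]
        rw [hLdef]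
        rw [SimpleGraph.Walk.getVert_length, SimpleGraph.Walk.getVert_zero]
      rw [this]
    · intro t ht
      show ShiftRel (φ (f t)).1 (φ (f (t + 1))).1 ∨ ShiftRel (φ (f (t + 1))).1 (φ (f t)).1
      have hadj : (graphOf EF).Adj (f t) (f (t + 1)) := wlk.adj_getVert_succ ht
      have hmem : φ '' {f t, f (t + 1)} ∈ ShiftE (L + 1) (BigO L) := hφE _ hadj.2
      rw [Set.image_pair] at hmem
      obtain ⟨A, B, hne, hsh, hpair⟩ := hmem
      rcases Set.pair_eq_pair_iff.mp hpair with ⟨h1, h2⟩ | ⟨h1, h2⟩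
      · left; rw [h1, h2]; exact hsh
      · right; rw [h1, h2]; exact hsh
  · -- bipartite → obligatory
    rintro ⟨c, hcprop⟩ V E h2 hχ
    -- no countable proper colouring
    have hnoc : ∀ (β : Type u) (g : V → β), #β ≤ ℵ₀ → ¬IsProperColoring E g := by
      intro β g hβ hg
      have hmem : #β ∈ { κ : Cardinal.{u} | ∃ (α : Type u) (f : V → α),
          Cardinal.mk α = κ ∧ IsProperColoring E f } := ⟨β, g, rfl, hg⟩
      have := csInf_le' hmem
      have hcon := le_trans hχ (le_trans this hβ)
      exact absurd hcon (not_le.mpr Cardinal.aleph0_lt_aleph_one)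
    have hnonat : ¬∃ f : V → ℕ, ∀ u v, (graphOf E).Adj u v → f u ≠ f v := by
      rintro ⟨f, hf⟩
      refine hnoc (ULift.{u} ℕ) (fun v => ULift.up (f v)) (le_of_eq (Cardinal.mk_denumerable _)) ?_
      refine proper_of_graph_proper h2 ?_
      intro u v huv heq
      exact hf u v huv (congrArg ULift.down heq)
    set n := Nat.card VF + 1 with hn
    -- K_{n,n}
    have hKnn : ∃ A B : Finset V, A.card = n ∧ B.card = n ∧ Disjoint A B ∧
        ∀ a ∈ A, ∀ b ∈ B, (graphOf E).Adj a b := by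
      by_contra hno
      refine hnonat (exists_proper_nat_coloring n (by omega) (#V) V rfl (graphOf E).Adj
        (fun _ _ h => (graphOf E).adj_symm h) (fun v h => (graphOf E).loopless.irrefl v h) ?_)
      intro S hS
      by_contra hinf
      have hinf' : {v | ∀ s ∈ S, (graphOf E).Adj v s}.Infinite := hinf
      obtain ⟨B, hB1, hB2⟩ := (hinf'.diff S.finite_toSet).exists_subset_card_eq n
      refine hno ⟨S, B, hS, hB2, ?_, ?_⟩
      · rw [Finset.disjoint_left]
        intro s hs hsB
        exact (hB1 hsB).2 hs
      · intro a ha b hb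
        exact (graphOf E).adj_symm ((hB1 hb).1 a ha)
    obtain ⟨A, B, hAcard, hBcard, hdisj, hAB⟩ := hKnn
    -- build the embedding
    haveI : Fintype VF := Fintype.ofFinite VF
    set P : Finset VF := Finset.univ.filter (fun v => c v = 0) with hP
    set Q : Finset VF := Finset.univ.filter (fun v => c v ≠ 0) with hQ
    have hPle : P.card ≤ A.card := by
      rw [hAcard, hn]
      have := Finset.card_le_card (Finset.subset_univ P)
      rw [Finset.card_univ, ← Nat.card_eq_fintype_card] at this
      omega
    have hQle : Q.card ≤ B.card := by
      rw [hBcard, hn]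
      have := Finset.card_le_card (Finset.subset_univ Q)
      rw [Finset.card_univ, ← Nat.card_eq_fintype_card] at this
      omega
    let ψP : {x // x ∈ P} → {x // x ∈ A} := fun x => A.equivFin.symm (Fin.castLE hPle (P.equivFin x))
    let ψQ : {x // x ∈ Q} → {x // x ∈ B} := fun x => B.equivFin.symm (Fin.castLE hQle (Q.equivFin x))
    have hψPinj : Function.Injective ψP := by
      intro x y h
      have := A.equivFin.symm.injective h
      exact P.equivFin.injective (Fin.castLE_injective _ this)
    have hψQinj : Function.Injective ψQ := by
      intro x y h
      have := B.equivFin.symm.injective h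
      exact Q.equivFin.injective (Fin.castLE_injective _ this)
    let φ : VF → V := fun v =>
      if h : c v = 0 then (ψP ⟨v, by simp [hP, h]⟩).1 else (ψQ ⟨v, by simp [hQ, h]⟩).1
    have hφA : ∀ v (h : c v = 0), φ v ∈ A ∧ φ v = (ψP ⟨v, by simp [hP, h]⟩).1 := by
      intro v h
      simp only [φ, dif_pos h]
      exact ⟨(ψP _).2, trivial⟩
    have hφB : ∀ v (h : ¬ c v = 0), φ v ∈ B ∧ φ v = (ψQ ⟨v, by simp [hQ, h]⟩).1 := by
      intro v h
      simp only [φ, dif_neg h]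
      exact ⟨(ψQ _).2, trivial⟩
    refine ⟨φ, ?_, ?_⟩
    · intro u v huv
      by_cases hu : c u = 0 <;> by_cases hv : c v = 0
      · have h1 := (hφA u hu).2
        have h2 := (hφA v hv).2
        rw [h1, h2] at huv
        have := hψPinj (Subtype.ext huv)
        exact congrArg Subtype.val this
      · exfalso
        have h1 : φ u ∈ A := (hφA u hu).1
        have h3 : φ v ∈ B := (hφB v hv).1
        rw [huv] at h1
        exact Finset.disjoint_left.mp hdisj h1 h3
      · exfalso
        have h1 : φ v ∈ A := (hφA v hv).1
        have h3 : φ u ∈ B := (hφB u hu).1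
        rw [← huv] at h1
        exact Finset.disjoint_left.mp hdisj h1 h3
      · have h1 := (hφB u hu).2
        have h2 := (hφB v hv).2
        rw [h1, h2] at huv
        have := hψQinj (Subtype.ext huv)
        exact congrArg Subtype.val this
    · intro e he
      obtain ⟨x, y, hxy, rfl⟩ := Set.ncard_eq_two.mp (hEF e he)
      have hcxy : c x ≠ c y := by
        intro hcc
        obtain ⟨a', ha', b', hb', hab⟩ := hcprop _ he
        rcases ha' with rfl | rfl <;> rcases hb' with rfl | rfl <;> first
          | exact hab rfl
          | exact hab hcc
          | exact hab hcc.symm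
      rw [Set.image_pair]
      by_cases hx : c x = 0
      · have hy : ¬ c y = 0 := fun h => hcxy (hx.trans h.symm)
        have hadj := hAB _ ((hφA x hx).1) _ ((hφB y hy).1)
        exact hadj.2
      · have hy : c y = 0 := by
          have : ∀ z : Fin 2, z = 0 ∨ z = 1 := by decide
          rcases this (c y) with h | h
          · exact h
          · rcases this (c x) with h' | h'
            · exact absurd h' hx
            · exact absurd (h'.trans h.symm) hcxy
        have hadj := hAB _ ((hφA y hy).1) _ ((hφB x hx).1)
        rw [Set.pair_comm]
        exact hadj.2
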